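/- Let p ≥ 1, let h, g ∈ ℝ^p, A ∈ ℝ^{p×p}, and let e_V : Ω → ℝ and e_X : Ω → ℝ^p be centered square-integrable random variables on a probability space. Set σ² := Var(e_V), v ∈ ℝ^p with v_i := Cov(e_{X,i}, e_V), and Σ ∈ ℝ^{p×p} with Σ_{ij} := Cov(e_{X,i}, e_{X,j}). Assume I − A − g h^⊤ is invertible with inverse M, and define the random variables V : Ω → ℝ and X : Ω → ℝ^p by (V, X^⊤)^⊤ := (I − Ã)^{-1}(e_V, e_X^⊤)^⊤, where Ã is the (1+p)×(1+p) block matrix with blocks [0, h^⊤; g, A] (equivalently, V = h^⊤X + e_V and X = gV + AX + e_X). Let Σ̃ := Σ + v g^⊤ + g v^⊤ and assume Σ̃ is invertible and 1 + σ² g^⊤ Σ̃^{-1} g ≠ 0; set c := (1 + σ² g^⊤ Σ̃^{-1} g)^{-1}. Then the covariance matrix Cov(X, X) is invertible and the population ordinary least squares coefficient θ := Cov(X, X)^{-1} Cov(X, V) satisfies θ = [c − g^⊤ Σ̃^{-1} (I − c σ² g g^⊤ Σ̃^{-1}) v] · h + (I − A^⊤) [c σ² Σ̃^{-1} g + Σ̃^{-1}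 (I − c σ² g g^⊤ Σ̃^{-1}) v]. -/

import Mathlib

open MeasureTheory Matrix

lemma aux_int_mul {Ω : Type*} [MeasurableSpace Ω] {μ : Measure Ω} {f g : Ω → ℝ}
    (hf : MemLp f 2 μ) (hg : MemLp g 2 μ) : Integrable (fun ω => f ω * g ω) μ := by
  have h : MemLp (f • g) 1 μ := hg.smul hf (hpqr := ⟨by simp [ENNReal.inv_two_add_inv_two]⟩)
  exact memLp_one_iff_integrable.mp h

lemma aux_vecMulVec_mulVec {p : ℕ} (a b x : Fin p → ℝ) :
    vecMulVec a b *ᵥ x = (b ⬝ᵥ x) • a := by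
  funext i
  simp only [mulVec, vecMulVec_apply, dotProduct, Pi.smul_apply, smul_eq_mul, Finset.sum_mul]
  apply Finset.sum_congr rfl
  intros; ring

lemma aux_vecMulVec_transpose {p : ℕ} (a b : Fin p → ℝ) :
    (vecMulVec a b)ᵀ = vecMulVec b a := by
  ext i j; simp [vecMulVec_apply, mul_comm]

lemma aux_GSiG {p : ℕ} (g : Fin p → ℝ) (Si : Matrix (Fin p) (Fin p) ℝ) :
    vecMulVec g g * (Si * vecMulVec g g) = (g ⬝ᵥ (Si *ᵥ g)) • vecMulVec g g := by
  ext i j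
  simp only [Matrix.mul_apply, vecMulVec_apply, Matrix.smul_apply, smul_eq_mul, mulVec,
    dotProduct, Finset.mul_sum, Finset.sum_mul]
  refine Finset.sum_congr rfl fun k _ => ?_
  refine Finset.sum_congr rfl fun l _ => ?_
  ring

lemma aux_SM {p : ℕ} (St : Matrix (Fin p) (Fin p) ℝ) (hSt : IsUnit St.det)
    (g : Fin p → ℝ) (σ2 c : ℝ)
    (hcd : c * (1 + σ2 * (g ⬝ᵥ (St⁻¹ *ᵥ g))) = 1) :
    (St + σ2 • vecMulVec g g) * (St⁻¹ - (c*σ2) • (St⁻¹ * (vecMulVec g g * St⁻¹))) = 1 ∧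
    (St⁻¹ - (c*σ2) • (St⁻¹ * (vecMulVec g g * St⁻¹))) * (St + σ2 • vecMulVec g g) = 1 := by
  set G := vecMulVec g g with hG
  set Si := St⁻¹ with hSi
  set d := g ⬝ᵥ (Si *ᵥ g) with hd
  have h1 : St * Si = 1 := Matrix.mul_nonsing_inv St hSt
  have h2 : Si * St = 1 := Matrix.nonsing_inv_mul St hSt
  have hkey : G * (Si * G) = d • G := aux_GSiG g Si
  have e1 : St * (Si * (G * Si)) = G * Si := by
    rw [← Matrix.mul_assoc, h1, Matrix.one_mul]
  have e2 : G * (Si * (G * Si)) = d • (G * Si) := by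
    rw [← Matrix.mul_assoc Si G Si, ← Matrix.mul_assoc G (Si * G) Si, hkey, smul_mul_assoc]
  have e3 : (Si * (G * Si)) * St = Si * G := by
    rw [Matrix.mul_assoc, Matrix.mul_assoc, h2, Matrix.mul_one]
  have e4 : (Si * (G * Si)) * G = d • (Si * G) := by
    rw [Matrix.mul_assoc, Matrix.mul_assoc, hkey, mul_smul_comm]
  have hz : -(c*σ2) + (σ2 - σ2*(c*σ2*d)) = 0 := by linear_combination (-σ2) * hcd
  constructor
  · simp only [add_mul, mul_add, mul_sub, sub_mul, smul_mul_assoc, mul_smul_comm, smul_smul,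
      h1, e1, e2]
    calc 1 + σ2 • (G * Si) - (c * σ2) • (G * Si + (σ2 * d) • (G * Si))
        = 1 + ((-(c*σ2)) + (σ2 - σ2*(c*σ2*d))) • (G * Si) := by module
      _ = 1 := by rw [hz, zero_smul, add_zero]
  · simp only [add_mul, mul_add, mul_sub, sub_mul, smul_mul_assoc, mul_smul_comm, smul_smul,
      h2, e3, e4]
    calc 1 - (c * σ2) • (Si * G) + σ2 • (Si * G - (c * σ2 * d) • (Si * G))
        = 1 + ((-(c*σ2)) + (σ2 - σ2*(c*σ2*d))) • (Si * G) := by module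
      _ = 1 := by rw [hz, zero_smul, add_zero]

theorem stmt_0
    {Ω : Type*} [MeasurableSpace Ω] (μ : Measure Ω) [IsProbabilityMeasure μ]
    (p : ℕ) (hp : 1 ≤ p)
    (h g : Fin p → ℝ) (A : Matrix (Fin p) (Fin p) ℝ)
    (eV : Ω → ℝ) (eX : Ω → Fin p → ℝ)
    (heV : MemLp eV 2 μ) (heX : ∀ i, MemLp (fun ω => eX ω i) 2 μ)
    (heV0 : ∫ ω, eV ω ∂μ = 0) (heX0 : ∀ i, ∫ ω, eX ω i ∂μ = 0)
    (M : Matrix (Fin p) (Fin p) ℝ)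
    (hM₁ : (1 - A - vecMulVec g h) * M = 1)
    (hM₂ : M * (1 - A - vecMulVec g h) = 1)
    (V : Ω → ℝ) (X : Ω → Fin p → ℝ)
    (hV : ∀ ω, V ω = h ⬝ᵥ X ω + eV ω)
    (hX : ∀ ω, X ω = V ω • g + A *ᵥ X ω + eX ω)
    (σ2 : ℝ) (hσ2 : σ2 = ∫ ω, eV ω * eV ω ∂μ)
    (v : Fin p → ℝ) (hv : ∀ i, v i = ∫ ω, eX ω i * eV ω ∂μ)
    (S : Matrix (Fin p) (Fin p) ℝ) (hS : ∀ i j, S i j = ∫ ω, eX ω i * eX ω j ∂μ)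
    (St : Matrix (Fin p) (Fin p) ℝ)
    (hStdef : St = S + vecMulVec v g + vecMulVec g v)
    (hSt : IsUnit St.det)
    (hden : 1 + σ2 * (g ⬝ᵥ (St⁻¹ *ᵥ g)) ≠ 0)
    (c : ℝ) (hc : c = (1 + σ2 * (g ⬝ᵥ (St⁻¹ *ᵥ g)))⁻¹)
    (CovXX : Matrix (Fin p) (Fin p) ℝ)
    (hCovXX : ∀ i j, CovXX i j = ∫ ω, X ω i * X ω j ∂μ)
    (CovXV : Fin p → ℝ)
    (hCovXV : ∀ i, CovXV i = ∫ ω, X ω i * V ω ∂μ) :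
    IsUnit CovXX.det ∧
      CovXX⁻¹ *ᵥ CovXV =
        (c - g ⬝ᵥ (St⁻¹ *ᵥ ((1 - (c * σ2) • (vecMulVec g g * St⁻¹)) *ᵥ v))) • h +
          (1 - Aᵀ) *ᵥ ((c * σ2) • (St⁻¹ *ᵥ g) +
            St⁻¹ *ᵥ ((1 - (c * σ2) • (vecMulVec g g * St⁻¹)) *ᵥ v)) := by
  -- notation
  set N : Matrix (Fin p) (Fin p) ℝ := 1 - A - vecMulVec g h with hN
  set W : Ω → Fin p → ℝ := fun ω k => g k * eV ω + eX ω k with hWdef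
  set G : Matrix (Fin p) (Fin p) ℝ := vecMulVec g g with hG
  set Si : Matrix (Fin p) (Fin p) ℝ := St⁻¹ with hSi
  set d : ℝ := g ⬝ᵥ (Si *ᵥ g) with hd
  set B : Matrix (Fin p) (Fin p) ℝ := St + σ2 • G with hB
  set K : Matrix (Fin p) (Fin p) ℝ := Si - (c*σ2) • (Si * (G * Si)) with hK
  have hcd : c * (1 + σ2 * d) = 1 := by rw [hc]; exact inv_mul_cancel₀ hden
  -- representation X = M W
  have hXW : ∀ ω, X ω = M *ᵥ W ω := by
    intro ω
    have hNX : N *ᵥ X ω = W ω := by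
      funext k
      have hx := congrFun (hX ω) k
      simp only [Pi.add_apply, Pi.smul_apply, smul_eq_mul, hV ω] at hx
      simp only [hN, sub_mulVec, one_mulVec, aux_vecMulVec_mulVec, Pi.sub_apply,
        Pi.smul_apply, smul_eq_mul, hWdef]
      linear_combination hx
    calc X ω = 1 *ᵥ X ω := (one_mulVec _).symm
      _ = (M * N) *ᵥ X ω := by rw [hM₂]
      _ = M *ᵥ (N *ᵥ X ω) := (mulVec_mulVec _ _ _).symm
      _ = M *ᵥ W ω := by rw [hNX]
  -- L² facts
  have hW2 : ∀ k, MemLp (fun ω => W ω k) 2 μ := by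
    intro k
    exact (heV.const_mul (g k)).add (heX k)
  have hX2 : ∀ i, MemLp (fun ω => X ω i) 2 μ := by
    intro i
    have : (fun ω => X ω i) = fun ω => ∑ k, M i k * W ω k := by
      funext ω; rw [hXW ω]; simp [mulVec, dotProduct]
    rw [this]
    exact memLp_finset_sum _ fun k _ => (hW2 k).const_mul (M i k)
  -- base integrals
  have hIWW : ∀ k l, ∫ ω, W ω k * W ω l ∂μ = St k l + σ2 * (g k * g l) := by
    intro k l
    have hfun : ∀ ω, W ω k * W ω l
        = ((g k * g l) * (eV ω * eV ω) + g k * (eX ω l * eV ω))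
          + (g l * (eX ω k * eV ω) + eX ω k * eX ω l) := by
      intro ω; simp only [hWdef]; ring
    rw [integral_congr_ae (Filter.Eventually.of_forall hfun)]
    have i1 : Integrable (fun ω => eV ω * eV ω) μ := aux_int_mul heV heV
    have i2 : Integrable (fun ω => eX ω l * eV ω) μ := aux_int_mul (heX l) heV
    have i3 : Integrable (fun ω => eX ω k * eV ω) μ := aux_int_mul (heX k) heV
    have i4 : Integrable (fun ω => eX ω k * eX ω l) μ := aux_int_mul (heX k) (heX l)
    have j1 : Integrable (fun ω => g k * g l * (eV ω * eV ω) + g k * (eX ω l * eV ω)) μ :=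
      (i1.const_mul _).add (i2.const_mul _)
    have j2 : Integrable (fun ω => g l * (eX ω k * eV ω) + eX ω k * eX ω l) μ :=
      (i3.const_mul _).add i4
    rw [integral_add j1 j2,
      integral_add (i1.const_mul (g k * g l)) (i2.const_mul (g k)),
      integral_add (i3.const_mul (g l)) i4,
      integral_const_mul, integral_const_mul, integral_const_mul]
    rw [← hσ2, ← hv l, ← hv k, ← hS k l]
    rw [hStdef]
    simp only [Matrix.add_apply, vecMulVec_apply]
    ring
  have hIWeV : ∀ k, ∫ ω, W ω k * eV ω ∂μ = σ2 * g k + v k := by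
    intro k
    have hfun : ∀ ω, W ω k * eV ω = g k * (eV ω * eV ω) + eX ω k * eV ω := by
      intro ω; simp only [hWdef]; ring
    rw [integral_congr_ae (Filter.Eventually.of_forall hfun)]
    have i1 : Integrable (fun ω => eV ω * eV ω) μ := aux_int_mul heV heV
    have i3 : Integrable (fun ω => eX ω k * eV ω) μ := aux_int_mul (heX k) heV
    rw [integral_add (i1.const_mul (g k)) i3, integral_const_mul, ← hσ2, ← hv k]
    ring
  -- CovXX = M B Mᵀ
  have hCovXXB : CovXX = M * B * Mᵀ := by
    ext i j
    rw [hCovXX i j]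
    have hfun : ∀ ω, X ω i * X ω j = ∑ k, ∑ l, (M i k * M j l) * (W ω k * W ω l) := by
      intro ω
      rw [hXW ω]
      simp only [mulVec, dotProduct, Finset.sum_mul_sum]
      refine Finset.sum_congr rfl fun k _ => Finset.sum_congr rfl fun l _ => by ring
    rw [integral_congr_ae (Filter.Eventually.of_forall hfun)]
    rw [integral_finset_sum _ fun k _ => integrable_finset_sum _ fun l _ =>
      (aux_int_mul (hW2 k) (hW2 l)).const_mul _]
    have : ∀ k, ∫ ω, ∑ l, (M i k * M j l) * (W ω k * W ω l) ∂μ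
        = ∑ l, (M i k * M j l) * (St k l + σ2 * (g k * g l)) := by
      intro k
      rw [integral_finset_sum _ fun l _ => (aux_int_mul (hW2 k) (hW2 l)).const_mul _]
      exact Finset.sum_congr rfl fun l _ => by rw [integral_const_mul, hIWW k l]
    rw [Finset.sum_congr rfl fun k _ => this k]
    simp only [Matrix.mul_apply, Matrix.transpose_apply, hB, hG, Matrix.add_apply,
      Matrix.smul_apply, vecMulVec_apply, smul_eq_mul, Finset.sum_mul]
    rw [Finset.sum_comm]
    refine Finset.sum_congr rfl fun l _ => Finset.sum_congr rfl fun k _ => by ring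
  -- CovXV = CovXX h + M (σ2 g + v)
  have hXeV : ∀ i, ∫ ω, X ω i * eV ω ∂μ = (M *ᵥ (σ2 • g + v)) i := by
    intro i
    have hfun : ∀ ω, X ω i * eV ω = ∑ k, M i k * (W ω k * eV ω) := by
      intro ω
      rw [hXW ω]
      simp only [mulVec, dotProduct, Finset.sum_mul]
      refine Finset.sum_congr rfl fun k _ => by ring
    rw [integral_congr_ae (Filter.Eventually.of_forall hfun)]
    rw [integral_finset_sum _ fun k _ => (aux_int_mul (hW2 k) heV).const_mul _]
    simp only [mulVec, dotProduct, Pi.add_apply, Pi.smul_apply, smul_eq_mul]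
    refine Finset.sum_congr rfl fun k _ => by rw [integral_const_mul, hIWeV k]
  have hCovXVeq : CovXV = CovXX *ᵥ h + M *ᵥ (σ2 • g + v) := by
    funext i
    rw [hCovXV i]
    have hfun : ∀ ω, X ω i * V ω = (∑ j, h j * (X ω i * X ω j)) + X ω i * eV ω := by
      intro ω
      rw [hV ω]
      simp only [dotProduct, Finset.sum_mul, Finset.mul_sum, mul_add]
      congr 1
      exact Finset.sum_congr rfl fun j _ => by ring
    rw [integral_congr_ae (Filter.Eventually.of_forall hfun)]
    have jsum : Integrable (fun ω => ∑ j, h j * (X ω i * X ω j)) μ :=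
      integrable_finset_sum _ fun j _ => (aux_int_mul (hX2 i) (hX2 j)).const_mul (h j)
    rw [integral_add jsum (aux_int_mul (hX2 i) heV)]
    rw [integral_finset_sum _ fun j _ => (aux_int_mul (hX2 i) (hX2 j)).const_mul (h j)]
    rw [hXeV i]
    simp only [Pi.add_apply, mulVec, dotProduct]
    congr 1
    refine Finset.sum_congr rfl fun j _ => by
      rw [integral_const_mul, ← hCovXX i j]; ring
  -- Sherman-Morrison
  obtain ⟨hBK, hKB⟩ := aux_SM St hSt g σ2 c hcd
  have hBdet : IsUnit B.det := Matrix.isUnit_det_of_left_inverse hKB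
  have hMdet : IsUnit M.det := Matrix.isUnit_det_of_left_inverse hM₁
  have hCovdet : IsUnit CovXX.det := by
    rw [hCovXXB, Matrix.det_mul, Matrix.det_mul, Matrix.det_transpose]
    exact (hMdet.mul hBdet).mul hMdet
  refine ⟨hCovdet, ?_⟩
  -- the vector u
  set w : Fin p → ℝ := Si *ᵥ ((1 - (c * σ2) • (G * Si)) *ᵥ v) with hw
  set u : Fin p → ℝ := (c * σ2) • (Si *ᵥ g) + w with hu
  -- u = K (σ2 g + v)
  have hKu : K *ᵥ (σ2 • g + v) = u := by
    have hGSg : (G * Si) *ᵥ g = d • g := by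
      rw [← mulVec_mulVec, hG, aux_vecMulVec_mulVec, hd]
    have expand : K *ᵥ (σ2 • g + v)
        = σ2 • (Si *ᵥ g) + Si *ᵥ v
          - ((c*σ2) • (σ2 • (Si *ᵥ ((G * Si) *ᵥ g)) + Si *ᵥ ((G * Si) *ᵥ v))) := by
      simp only [hK, sub_mulVec, smul_mulVec, mulVec_add, mulVec_smul,
        ← mulVec_mulVec, Matrix.mul_assoc]
      module
    rw [expand, hGSg]
    have hscal : σ2 - (c*σ2) * (σ2 * d) = c * σ2 := by linear_combination (-σ2) * hcd
    have hwexp : w = Si *ᵥ v - (c*σ2) • (Si *ᵥ ((G * Si) *ᵥ v)) := by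
      rw [hw, sub_mulVec, one_mulVec, mulVec_sub, smul_mulVec, mulVec_smul]
    rw [hu, hwexp]
    have : Si *ᵥ (d • g) = d • (Si *ᵥ g) := mulVec_smul _ _ _
    rw [this]
    calc σ2 • (Si *ᵥ g) + Si *ᵥ v
          - ((c*σ2) • (σ2 • (d • (Si *ᵥ g)) + Si *ᵥ ((G * Si) *ᵥ v)))
        = (σ2 - (c*σ2) * (σ2 * d)) • (Si *ᵥ g)
            + (Si *ᵥ v - (c*σ2) • (Si *ᵥ ((G * Si) *ᵥ v))) := by module
      _ = (c * σ2) • (Si *ᵥ g) + (Si *ᵥ v - (c*σ2) • (Si *ᵥ ((G * Si) *ᵥ v))) := by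
          rw [hscal]
  have hBu : B *ᵥ u = σ2 • g + v := by
    rw [← hKu, mulVec_mulVec, hBK, one_mulVec]
  -- scalar identity
  have hscal2 : c - g ⬝ᵥ w = 1 - g ⬝ᵥ u := by
    have : g ⬝ᵥ u = (c*σ2) * d + g ⬝ᵥ w := by
      rw [hu, dotProduct_add, dotProduct_smul, hd, smul_eq_mul]
    rw [this]
    linear_combination hcd
  -- RHS = h + Nᵀ u
  have hNTu : (c - g ⬝ᵥ w) • h + (1 - Aᵀ) *ᵥ u = h + Nᵀ *ᵥ u := by
    rw [hscal2, hN]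
    simp only [Matrix.transpose_sub, Matrix.transpose_one, aux_vecMulVec_transpose,
      sub_mulVec, one_mulVec, aux_vecMulVec_mulVec]
    module
  -- CovXX (h + Nᵀ u) = CovXV
  have hMtNt : Mᵀ * Nᵀ = 1 := by
    rw [← Matrix.transpose_mul, hM₁, Matrix.transpose_one]
  have hfinal : CovXX *ᵥ (h + Nᵀ *ᵥ u) = CovXV := by
    rw [hCovXVeq, hCovXXB, mulVec_add, mulVec_mulVec, Matrix.mul_assoc (M * B) Mᵀ Nᵀ,
      hMtNt, Matrix.mul_one, ← mulVec_mulVec u M B, hBu]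
  -- conclude
  have : CovXX⁻¹ *ᵥ CovXV = h + Nᵀ *ᵥ u := by
    rw [← hfinal, mulVec_mulVec, Matrix.nonsing_inv_mul _ hCovdet, one_mulVec]
  rw [this, ← hNTu]
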